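/- Fix a real θ and n ≥ 1, and define Λ(X) = (cos θ)^2 • X + ((sin θ)^2 / n) · trace(X) • 1 on n×n complex matrices. Let ρ and σ be Hermitian n×n complex matrices with trace(ρ) = trace(σ). Then the sum over i of |eigenvalues of (Λ(ρ) − Λ(σ))| equals (cos θ)^2 times the sum over i of |eigenvalues of (ρ − σ)|, where eigenvalues are taken via Matrix.IsHermitian.eigenvalues (Λ(ρ) − Λ(σ) = cos²θ • (ρ − σ) is Hermitian). -/

import Mathlib

open scoped Matrix

open Polynomial Matrix in
/-- `charpoly` is invariant under conjugation `D ↦ U * D * V` when `U * V = 1`. -/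
lemma charpoly_conj_aux {n : ℕ} (U D V : Matrix (Fin n) (Fin n) ℂ) (hUV : U * V = 1) :
    (U * D * V).charpoly = D.charpoly := by
  unfold Matrix.charpoly
  have hmm : (C : ℂ →+* ℂ[X]).mapMatrix U * (C : ℂ →+* ℂ[X]).mapMatrix V = 1 := by
    rw [← _root_.map_mul, hUV, _root_.map_one]
  have key : charmatrix (U * D * V) =
      (C : ℂ →+* ℂ[X]).mapMatrix U * charmatrix D * (C : ℂ →+* ℂ[X]).mapMatrix V := by
    unfold charmatrix
    rw [mul_sub, sub_mul]
    congr 1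
    · rw [Matrix.scalar_apply, ← Matrix.smul_one_eq_diagonal, Matrix.mul_smul,
        Matrix.smul_mul, mul_one, hmm]
    · simp [mul_assoc]
  rw [key, Matrix.det_mul, Matrix.det_mul, mul_right_comm, ← Matrix.det_mul, hmm,
    Matrix.det_one, one_mul]

open Polynomial Matrix in
lemma charpoly_diag {n : ℕ} (d : Fin n → ℂ) :
    (Matrix.diagonal d).charpoly = ∏ i, (X - C (d i)) := by
  unfold Matrix.charpoly
  have : charmatrix (Matrix.diagonal d) = Matrix.diagonal fun i => (X - C (d i)) := by
    unfold charmatrix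
    rw [Matrix.scalar_apply]
    simp [RingHom.mapMatrix_apply, Matrix.diagonal_map, ← Matrix.diagonal_sub]
  rw [this, Matrix.det_diagonal]

open Polynomial Matrix in
/-- The characteristic polynomial of a Hermitian matrix is the product of `X - λᵢ`. -/
lemma herm_charpoly {n : ℕ} (M : Matrix (Fin n) (Fin n) ℂ) (hM : M.IsHermitian) :
    M.charpoly = ∏ i, (X - C ((hM.eigenvalues i : ℂ))) := by
  conv_lhs => rw [hM.spectral_theorem, Unitary.conjStarAlgAut_apply]
  rw [charpoly_conj_aux, charpoly_diag]
  · rfl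
  · exact (Matrix.mem_unitaryGroup_iff.mp hM.eigenvectorUnitary.2)

open Polynomial Matrix in
/-- The multiset of roots of the characteristic polynomial of a Hermitian matrix is the
multiset of its eigenvalues. -/
lemma herm_roots {n : ℕ} (M : Matrix (Fin n) (Fin n) ℂ) (hM : M.IsHermitian) :
    M.charpoly.roots = Finset.univ.val.map (fun i => ((hM.eigenvalues i : ℂ))) := by
  rw [herm_charpoly M hM]
  rw [Finset.prod_eq_multiset_prod,
    show (Multiset.map (fun i => X - C ((hM.eigenvalues i : ℂ))) Finset.univ.val)
      = Multiset.map (fun a => X - C a)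
        (Finset.univ.val.map fun i => ((hM.eigenvalues i : ℂ))) from
      by rw [Multiset.map_map]; rfl]
  exact Polynomial.roots_multiset_prod_X_sub_C _

open Polynomial Matrix in
/-- For `B = r • A` with `r ≥ 0` and `A` Hermitian, the sum of the absolute values of the
eigenvalues of `B` is `r` times that of `A`. -/
lemma sum_abs_smul {n : ℕ} (r : ℝ) (hr : 0 ≤ r) (A B : Matrix (Fin n) (Fin n) ℂ)
    (hA : A.IsHermitian) (hB : B.IsHermitian) (hBA : B = r • A) :
    ∑ i, |hB.eigenvalues i| = r * ∑ i, |hA.eigenvalues i| := by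
  have hdecomp : B = (hA.eigenvectorUnitary : Matrix (Fin n) (Fin n) ℂ)
      * Matrix.diagonal (fun i => ((r * hA.eigenvalues i : ℝ) : ℂ))
      * star (hA.eigenvectorUnitary : Matrix (Fin n) (Fin n) ℂ) := by
    rw [hBA]
    conv_lhs => rw [hA.spectral_theorem, Unitary.conjStarAlgAut_apply]
    rw [← Matrix.smul_mul, ← Matrix.mul_smul, ← Matrix.diagonal_smul]
    congr 2
    ext i j
    simp only [Matrix.smul_apply, Matrix.diagonal_apply, Function.comp]
    split <;> simp [Complex.real_smul]
  have hch : B.charpoly = ∏ i, (X - C (((r * hA.eigenvalues i : ℝ) : ℂ))) := by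
    rw [hdecomp, charpoly_conj_aux, charpoly_diag]
    exact (Matrix.mem_unitaryGroup_iff.mp hA.eigenvectorUnitary.2)
  have hroots2 : B.charpoly.roots
      = Finset.univ.val.map (fun i => (((r * hA.eigenvalues i : ℝ) : ℂ))) := by
    rw [hch, Finset.prod_eq_multiset_prod,
      show (Multiset.map (fun i => X - C (((r * hA.eigenvalues i : ℝ) : ℂ))) Finset.univ.val)
        = Multiset.map (fun a => X - C a)
          (Finset.univ.val.map fun i => (((r * hA.eigenvalues i : ℝ) : ℂ))) from
        by rw [Multiset.map_map]; rfl]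
    exact Polynomial.roots_multiset_prod_X_sub_C _
  have hmul : Finset.univ.val.map (fun i => ((hB.eigenvalues i : ℂ)))
      = Finset.univ.val.map (fun i => (((r * hA.eigenvalues i : ℝ) : ℂ))) := by
    rw [← herm_roots B hB, hroots2]
  have key : ∑ i, |hB.eigenvalues i| = ∑ i, |r * hA.eigenvalues i| := by
    have h := congrArg (fun s : Multiset ℂ => (s.map (fun z => |z.re|)).sum) hmul
    simpa [Multiset.map_map, Function.comp_def, Finset.sum_eq_multiset_sum,
      ← Complex.ofReal_mul, Complex.ofReal_re] using h
  rw [key, Finset.mul_sum]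
  exact Finset.sum_congr rfl fun i _ => by rw [abs_mul, abs_of_nonneg hr]

/-- The trace norm (sum of absolute eigenvalues) of the difference of the outputs of the
depolarising channel `Λ(X) = cos²θ • X + (sin²θ/n)·tr(X) • 1` on two equal-trace Hermitian
states shrinks by exactly `cos²θ`. -/
theorem depolarising_trace_distance {n : ℕ} (hn : 1 ≤ n) (θ : ℝ)
    (Λ : Matrix (Fin n) (Fin n) ℂ → Matrix (Fin n) (Fin n) ℂ)
    (hΛ : ∀ X, Λ X = (Real.cos θ) ^ 2 • X
        + (((Real.sin θ : ℂ) ^ 2 / n) * Matrix.trace X) • (1 : Matrix (Fin n) (Fin n) ℂ))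
    (ρ σ : Matrix (Fin n) (Fin n) ℂ)
    (hρ : ρ.IsHermitian) (hσ : σ.IsHermitian)
    (htr : Matrix.trace ρ = Matrix.trace σ)
    (h1 : (Λ ρ - Λ σ).IsHermitian) (h2 : (ρ - σ).IsHermitian) :
    ∑ i, |h1.eigenvalues i| = (Real.cos θ) ^ 2 * ∑ i, |h2.eigenvalues i| := by
  have hdiff : Λ ρ - Λ σ = ((Real.cos θ) ^ 2 : ℝ) • (ρ - σ) := by
    rw [hΛ ρ, hΛ σ, htr, smul_sub]
    abel
  exact sum_abs_smul _ (sq_nonneg _) _ _ h2 h1 hdiff
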